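/- For each c > 0, define σ₀(c) := sup{ s ∈ [0,1] : g(c, s) ≥ 0 }. Then σ₀(c) ∈ (0, 1), g(c, σ₀(c)) = 0, and g(c, s) < 0 for every s ∈ (σ₀(c), 1]. -/

import Mathlib

open MeasureTheory ProbabilityTheory
open scoped ENNReal

/-- The logistic sigmoid `S(t) = 1/(1 + exp(-t))`. -/
noncomputable def S (t : ℝ) : ℝ := 1 / (1 + Real.exp (-t))

/-- The standard Gaussian measure on `ℝ`. -/
noncomputable def γ : Measure ℝ := gaussianReal 0 1

/-- The validation mean `μᵥ(s) := √(2(1 - s²))`. -/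
noncomputable def μv (s : ℝ) : ℝ := Real.sqrt (2 * (1 - s ^ 2))

/-- `g(c, s) := -E_Z[(S(c(μᵥ(s) + s Z)) - 1)(μᵥ(s) + s Z)]` for a standard Gaussian `Z`. -/
noncomputable def g (c s : ℝ) : ℝ :=
  -∫ z, (S (c * (μv s + s * z)) - 1) * (μv s + s * z) ∂γ

/-- `σ₀(c) := sup { s ∈ [0,1] : g(c, s) ≥ 0 }`. -/
noncomputable def σ₀ (c : ℝ) : ℝ := sSup {s : ℝ | s ∈ Set.Icc (0 : ℝ) 1 ∧ 0 ≤ g c s}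

instance : IsProbabilityMeasure γ := by unfold γ; infer_instance

lemma S_pos (t : ℝ) : 0 < S t := by unfold S; positivity

lemma S_lt_one (t : ℝ) : S t < 1 := by
  unfold S
  rw [div_lt_one (by positivity)]
  linarith [Real.exp_pos (-t)]

lemma S_strictMono : StrictMono S := by
  intro a b hab
  unfold S
  rw [div_lt_div_iff₀ (by positivity) (by positivity)]
  have : Real.exp (-b) < Real.exp (-a) := Real.exp_lt_exp.mpr (by linarith)
  linarith

lemma continuous_S : Continuous S :=
  continuous_const.div (by continuity) (fun t => by positivity)

lemma continuous_μv : Continuous μv :=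
  Real.continuous_sqrt.comp (by continuity)

lemma μv_nonneg (s : ℝ) : 0 ≤ μv s := Real.sqrt_nonneg _

lemma μv_le (s : ℝ) : μv s ≤ Real.sqrt 2 := by
  apply Real.sqrt_le_sqrt; nlinarith [sq_nonneg s]

lemma abs_F_le (c s z : ℝ) :
    |(S (c * (μv s + s * z)) - 1) * (μv s + s * z)| ≤ Real.sqrt 2 + |s| * |z| := by
  rw [abs_mul]
  have h1 : |S (c * (μv s + s * z)) - 1| ≤ 1 := by
    have h2 := S_lt_one (c * (μv s + s * z))
    have h3 := S_pos (c * (μv s + s * z))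
    rw [abs_le]; constructor <;> linarith
  calc |S (c * (μv s + s * z)) - 1| * |μv s + s * z| ≤ 1 * |μv s + s * z| := by
        apply mul_le_mul_of_nonneg_right h1 (abs_nonneg _)
    _ = |μv s + s * z| := one_mul _
    _ ≤ |μv s| + |s * z| := abs_add_le _ _
    _ ≤ Real.sqrt 2 + |s| * |z| := by
        rw [abs_of_nonneg (μv_nonneg s), abs_mul]
        exact add_le_add (μv_le s) le_rfl

lemma integrable_abs_gaussian : Integrable (fun z : ℝ => |z|) γ := by
  rw [γ, gaussianReal_of_var_ne_zero 0 one_ne_zero,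
    integrable_withDensity_iff (measurable_gaussianPDF 0 1)
      (Filter.Eventually.of_forall fun x => ENNReal.ofReal_lt_top)]
  have h1 : Integrable (fun x : ℝ => x * Real.exp (-(1/2) * x ^ 2)) volume := by
    have := integrable_rpow_mul_exp_neg_mul_sq (b := 1/2) (by norm_num) (s := 1) (by norm_num)
    simpa [Real.rpow_one] using this
  have h2 := (h1.abs).const_mul (Real.sqrt (2 * Real.pi * (1:ℝ)))⁻¹
  apply h2.congr
  filter_upwards with x
  rw [gaussianPDF, ENNReal.toReal_ofReal (gaussianPDFReal_nonneg _ _ _), gaussianPDFReal]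
  rw [abs_mul, abs_of_nonneg (Real.exp_pos _).le]
  push_cast
  rw [show -(x - 0) ^ 2 / (2 * 1) = -(1/2) * x ^ 2 by ring]
  ring

lemma integrable_bound (K : ℝ) : Integrable (fun z : ℝ => Real.sqrt 2 + K * |z|) γ :=
  (integrable_const _).add (integrable_abs_gaussian.const_mul K)

lemma aesm_F (c s : ℝ) :
    AEStronglyMeasurable (fun z => (S (c * (μv s + s * z)) - 1) * (μv s + s * z)) γ := by
  apply Continuous.aestronglyMeasurable
  have : Continuous fun z : ℝ => μv s + s * z := by continuity
  exact ((continuous_S.comp (this.const_smul c)).sub continuous_const).mul this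

lemma integrable_F (c s : ℝ) :
    Integrable (fun z => (S (c * (μv s + s * z)) - 1) * (μv s + s * z)) γ := by
  apply (integrable_bound |s|).mono' (aesm_F c s)
  filter_upwards with z
  rw [Real.norm_eq_abs]
  exact abs_F_le c s z

lemma continuous_g (c : ℝ) : Continuous (g c) := by
  rw [continuous_iff_continuousAt]
  intro s₀
  unfold g
  apply ContinuousAt.neg
  apply continuousAt_of_dominated (bound := fun z => Real.sqrt 2 + (|s₀| + 1) * |z|)
  · exact Filter.Eventually.of_forall fun s => aesm_F c s
  · have hball : Metric.ball s₀ 1 ∈ nhds s₀ := Metric.ball_mem_nhds _ one_pos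
    filter_upwards [hball] with s hs
    filter_upwards with z
    rw [Real.norm_eq_abs]
    refine (abs_F_le c s z).trans ?_
    have : |s| ≤ |s₀| + 1 := by
      have := abs_sub_abs_le_abs_sub s s₀
      have h2 : |s - s₀| < 1 := by simpa [Real.dist_eq] using hs
      linarith
    nlinarith [abs_nonneg z]
  · exact integrable_bound _
  · filter_upwards with z
    apply Continuous.continuousAt
    have h1 : Continuous fun s : ℝ => μv s + s * z :=
      continuous_μv.add (continuous_id.mul continuous_const)
    exact ((continuous_S.comp (h1.const_smul c)).sub continuous_const).mul h1

lemma μv_zero : μv 0 = Real.sqrt 2 := by simp [μv]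

lemma μv_one : μv 1 = 0 := by simp [μv]

lemma g_zero_pos (c : ℝ) : 0 < g c 0 := by
  have : g c 0 = (1 - S (c * Real.sqrt 2)) * Real.sqrt 2 := by
    unfold g
    simp only [μv_zero, zero_mul, add_zero]
    rw [integral_const]
    simp
    ring
  rw [this]
  have h1 := S_lt_one (c * Real.sqrt 2)
  have h2 : (0:ℝ) < Real.sqrt 2 := by positivity
  nlinarith

lemma gaussian_map_neg : γ.map (fun x : ℝ => -x) = γ := by
  unfold γ
  have := gaussianReal_map_const_mul (μ := 0) (v := 1) (-1)
  simp only [neg_mul, one_mul, mul_zero, neg_zero] at this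
  convert this using 2
  · norm_num

lemma g_one_neg (c : ℝ) (hc : 0 < c) : g c 1 < 0 := by
  set h : ℝ → ℝ := fun z => (S (c * z) - 1) * z with hh
  have hg : g c 1 = -∫ z, h z ∂γ := by
    unfold g
    simp only [μv_one, zero_add, one_mul, hh]
  have hint : Integrable h γ := by
    have := integrable_F c 1
    simpa [μv_one, hh] using this
  have haesm : AEStronglyMeasurable h γ := hint.1
  have haesm' : AEStronglyMeasurable h (γ.map (fun x : ℝ => -x)) := gaussian_map_neg.symm ▸ haesm
  have hmapint : Integrable (fun z => h (-z)) γ := by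
    have h1 : Integrable h (γ.map (fun x : ℝ => -x)) := gaussian_map_neg.symm ▸ hint
    exact (integrable_map_measure haesm' measurable_neg.aemeasurable).mp h1
  have hflip : ∫ z, h (-z) ∂γ = ∫ z, h z ∂γ := by
    have := integral_map (μ := γ) (φ := fun x : ℝ => -x) measurable_neg.aemeasurable haesm'
    rw [gaussian_map_neg] at this
    exact this.symm
  have expand : ∀ z : ℝ, h z + h (-z) = z * (S (c * z) - S (-(c * z))) := by
    intro z
    simp only [hh, mul_neg]
    ring
  have hHnn : ∀ z : ℝ, 0 ≤ h z + h (-z) := by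
    intro z
    rw [expand]
    rcases lt_trichotomy z 0 with hz | hz | hz
    · have : S (c * z) < S (-(c * z)) := S_strictMono (by nlinarith)
      nlinarith
    · simp [hz]
    · have : S (-(c * z)) < S (c * z) := S_strictMono (by nlinarith)
      nlinarith
  have hHpos : ∀ z : ℝ, z ≠ 0 → 0 < h z + h (-z) := by
    intro z hz
    rw [expand]
    rcases hz.lt_or_gt with hz | hz
    · have : S (c * z) < S (-(c * z)) := S_strictMono (by nlinarith)
      nlinarith
    · have : S (-(c * z)) < S (c * z) := S_strictMono (by nlinarith)
      nlinarith
  have hIntH : Integrable (fun z => h z + h (-z)) γ := hint.add hmapint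
  have hsupp : (0:ℝ≥0∞) < γ (Function.support fun z => h z + h (-z)) := by
    have hsub : ({0}ᶜ : Set ℝ) ⊆ Function.support fun z => h z + h (-z) := by
      intro z hz
      exact (hHpos z hz).ne'
    have hγ0 : γ ({0} : Set ℝ) = 0 := by
      have habs : γ ≪ volume := by
        unfold γ; exact gaussianReal_absolutelyContinuous 0 one_ne_zero
      exact habs Real.volume_singleton
    have h1 : γ ({0}ᶜ : Set ℝ) = 1 := by
      rw [measure_compl (measurableSet_singleton 0) (measure_ne_top _ _), hγ0, measure_univ]
      simp
    calc (0:ℝ≥0∞) < 1 := by norm_num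
      _ = γ ({0}ᶜ : Set ℝ) := h1.symm
      _ ≤ γ (Function.support fun z => h z + h (-z)) := measure_mono hsub
  have hpos : 0 < ∫ z, (h z + h (-z)) ∂γ :=
    (integral_pos_iff_support_of_nonneg_ae (Filter.Eventually.of_forall hHnn) hIntH).mpr hsupp
  rw [integral_add hint hmapint, hflip] at hpos
  rw [hg]
  linarith

/-- For each `c > 0`, the threshold `σ₀(c) := sup { s ∈ [0,1] : g(c, s) ≥ 0 }` satisfies
`σ₀(c) ∈ (0, 1)`, `g(c, σ₀(c)) = 0`, and `g(c, s) < 0` for every `s ∈ (σ₀(c), 1]`. -/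
theorem stmt13 (c : ℝ) (hc : 0 < c) :
    σ₀ c ∈ Set.Ioo (0 : ℝ) 1 ∧ g c (σ₀ c) = 0 ∧
      ∀ s ∈ Set.Ioc (σ₀ c) 1, g c s < 0 := by
  set T : Set ℝ := {s : ℝ | s ∈ Set.Icc (0 : ℝ) 1 ∧ 0 ≤ g c s} with hT
  have hT0 : (0:ℝ) ∈ T := ⟨⟨le_refl 0, zero_le_one⟩, (g_zero_pos c).le⟩
  have hTne : T.Nonempty := ⟨0, hT0⟩
  have hTbdd : BddAbove T := ⟨1, fun x hx => hx.1.2⟩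
  have hσeq : σ₀ c = sSup T := rfl
  have hσle1 : σ₀ c ≤ 1 := by
    rw [hσeq]; exact csSup_le hTne fun x hx => hx.1.2
  have hσ0 : 0 ≤ σ₀ c := by rw [hσeq]; exact le_csSup hTbdd hT0
  have hclosure : σ₀ c ∈ closure T := by
    rw [hσeq]
    exact (isLUB_csSup hTne hTbdd).mem_closure hTne
  have hge : 0 ≤ g c (σ₀ c) := by
    have hclosed : IsClosed {s : ℝ | 0 ≤ g c s} :=
      isClosed_le continuous_const (continuous_g c)
    have hsub : T ⊆ {s : ℝ | 0 ≤ g c s} := fun x hx => hx.2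
    exact closure_minimal hsub hclosed hclosure
  have hσlt1 : σ₀ c < 1 := by
    rcases hσle1.lt_or_eq with h | h
    · exact h
    · exfalso; rw [h] at hge; exact absurd hge (not_le.mpr (g_one_neg c hc))
  have hneg : ∀ s ∈ Set.Ioc (σ₀ c) 1, g c s < 0 := by
    intro s hs
    by_contra hcon
    push_neg at hcon
    have hsT : s ∈ T := ⟨⟨hσ0.trans hs.1.le, hs.2⟩, hcon⟩
    have : s ≤ σ₀ c := by rw [hσeq]; exact le_csSup hTbdd hsT
    exact absurd hs.1 (not_lt.mpr this)
  have hle : g c (σ₀ c) ≤ 0 := by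
    have htend : Filter.Tendsto (g c) (nhdsWithin (σ₀ c) (Set.Ioi (σ₀ c)))
        (nhds (g c (σ₀ c))) :=
      ((continuous_g c).continuousAt).continuousWithinAt.tendsto
    apply le_of_tendsto htend
    have hmem : Set.Ioo (σ₀ c) 1 ∈ nhdsWithin (σ₀ c) (Set.Ioi (σ₀ c)) :=
      Ioo_mem_nhdsGT_of_mem ⟨le_refl _, hσlt1⟩
    filter_upwards [hmem] with s hs
    exact (hneg s ⟨hs.1, hs.2.le⟩).le
  have hσpos : 0 < σ₀ c := by
    have h0 : Filter.Tendsto (g c) (nhds 0) (nhds (g c 0)) :=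
      (continuous_g c).continuousAt
    have hpre : g c ⁻¹' Set.Ioi 0 ∈ nhds (0:ℝ) :=
      h0 (Ioi_mem_nhds (g_zero_pos c))
    rcases Metric.mem_nhds_iff.mp hpre with ⟨ε, hε, hball⟩
    set t : ℝ := min (ε/2) 1 with ht
    have htpos : 0 < t := lt_min (by linarith) one_pos
    have htball : t ∈ Metric.ball (0:ℝ) ε := by
      rw [Metric.mem_ball, Real.dist_eq, sub_zero, abs_of_pos htpos]
      calc t ≤ ε/2 := min_le_left _ _
        _ < ε := by linarith
    have htT : t ∈ T := ⟨⟨htpos.le, min_le_right _ _⟩, (hball htball).le⟩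
    calc (0:ℝ) < t := htpos
      _ ≤ σ₀ c := by rw [hσeq]; exact le_csSup hTbdd htT
  exact ⟨⟨hσpos, hσlt1⟩, le_antisymm hle hge, hneg⟩
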